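/- (Weak completeness) Every sequent A ⊢ B of L₁-formulas that is valid in every Došen frame is provable in IDFNL. -/

import Mathlib

/-- Formulas of the language L₁. `ldiv A B` is A∖B, `rdiv B A` is B/A,
`ildiv A B` is A∖∖B (iterative left division), `irdiv B A` is B//A. -/
inductive Fm : Type where
  | var : ℕ → Fm
  | top : Fm
  | bot : Fm
  | and : Fm → Fm → Fm
  | or : Fm → Fm → Fm
  | prod : Fm → Fm → Fm
  | ldiv : Fm → Fm → Fm
  | rdiv : Fm → Fm → Fm
  | ildiv : Fm → Fm → Fm
  | irdiv : Fm → Fm → Fm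

/-- A Došen model on the set of states `S`: a ternary relation and a valuation. -/
structure DosenModel (S : Type*) where
  R : S → S → S → Prop
  V : ℕ → Set S

/-- `Rleft R x̄ s t` is the relation R⃖x̄ s t for a path x̄ (nonempty list). -/
def Rleft {S : Type*} (R : S → S → S → Prop) : List S → S → S → Prop
  | [], _, _ => False
  | [x], s, t => R x s t
  | x :: y :: xs, s, t => ∃ z, R x s z ∧ Rleft R (y :: xs) z t

/-- `Rright R s x̄ t` is the relation R s x̄⃗ t for a path x̄ (nonempty list). -/
def Rright {S : Type*} (R : S → S → S → Prop) : S → List S → S → Prop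
  | _, [], _ => False
  | s, [x], t => R s x t
  | s, x :: y :: xs, t => ∃ z, R s x z ∧ Rright R z (y :: xs) t

/-- Satisfaction: `sat M A s` means s ⊨ A in the model M. -/
def sat {S : Type*} (M : DosenModel S) : Fm → S → Prop
  | .var p, s => s ∈ M.V p
  | .top, _ => True
  | .bot, _ => False
  | .and A B, s => sat M A s ∧ sat M B s
  | .or A B, s => sat M A s ∨ sat M B s
  | .prod A B, s => ∃ t u, M.R t u s ∧ sat M A t ∧ sat M B u
  | .ldiv A B, s => ∀ t u, M.R t s u → sat M A t → sat M B u
  | .rdiv B A, s => ∀ t u, M.R s t u → sat M A t → sat M B u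
  | .ildiv A B, s =>
      ∀ (xs : List S) (t : S), xs ≠ [] → Rleft M.R xs s t → (∀ x ∈ xs, sat M A x) → sat M B t
  | .irdiv B A, s =>
      ∀ (xs : List S) (t : S), xs ≠ [] → Rright M.R s xs t → (∀ x ∈ xs, sat M A x) → sat M B t

/-- Validity of the sequent A ⊢ B in a model. -/
def valid {S : Type*} (M : DosenModel S) (A B : Fm) : Prop :=
  ∀ s, sat M A s → sat M B s

/-- `ldivN A B n` is A∖ⁿB (meaningful for n ≥ 1): A∖¹B = A∖B, A∖ⁿ⁺¹B = A∖(A∖ⁿB). -/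
def ldivN (A B : Fm) : ℕ → Fm
  | 0 => B
  | n + 1 => .ldiv A (ldivN A B n)

/-- `rdivN B A n` is B/ⁿA (meaningful for n ≥ 1): B/¹A = B/A, B/ⁿ⁺¹A = (B/ⁿA)/A. -/
def rdivN (B A : Fm) : ℕ → Fm
  | 0 => B
  | n + 1 => .rdiv (rdivN B A n) A

/-- `RIter R n` is the relation Rⁿ⁺¹ of the paper: R¹ = R,
R^{n+1} s t u iff ∃ x y, R s y u ∧ Rⁿ x t y. -/
def RIter {S : Type*} (R : S → S → S → Prop) : ℕ → S → S → S → Prop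
  | 0, s, t, u => R s t u
  | n + 1, s, t, u => ∃ x y, R s y u ∧ RIter R n x t y

/-- The left transitive closure R⁺ˡ = ⋃_{n ≥ 1} Rⁿ. -/
def RplusL {S : Type*} (R : S → S → S → Prop) (s t u : S) : Prop :=
  ∃ n, RIter R n s t u

/-- Provability in the axiom system IDFNL. `Prov A B` means A ⟶ B. -/
inductive Prov : Fm → Fm → Prop
  | id (A : Fm) : Prov A A
  | top (A : Fm) : Prov A .top
  | bot (A : Fm) : Prov .bot A
  | andE1 (A B : Fm) : Prov (A.and B) A
  | andE2 (A B : Fm) : Prov (A.and B) B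
  | orI1 (A B : Fm) : Prov A (A.or B)
  | orI2 (A B : Fm) : Prov B (A.or B)
  | distrib (A B C : Fm) : Prov (A.and (B.or C)) ((A.and B).or (A.and C))
  | ildivAnd (A B C : Fm) : Prov ((A.ildiv B).and (A.ildiv C)) (A.ildiv (B.and C))
  | ildivUnfold (A B : Fm) : Prov (A.ildiv B) ((A.ldiv B).and (A.ldiv (A.ildiv B)))
  | ildivFold (A B : Fm) : Prov ((A.ldiv B).and (A.ldiv (A.ildiv B))) (A.ildiv B)
  | irdivAnd (A B C : Fm) : Prov ((B.irdiv A).and (C.irdiv A)) ((B.and C).irdiv A)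
  | irdivUnfold (A B : Fm) : Prov (B.irdiv A) ((B.rdiv A).and ((B.irdiv A).rdiv A))
  | irdivFold (A B : Fm) : Prov (((B.irdiv A).rdiv A).and (B.rdiv A)) (B.irdiv A)
  | resL1 {A B C : Fm} : Prov (A.prod B) C → Prov B (A.ldiv C)
  | resL2 {A B C : Fm} : Prov B (A.ldiv C) → Prov (A.prod B) C
  | resR1 {A B C : Fm} : Prov (A.prod B) C → Prov A (C.rdiv B)
  | resR2 {A B C : Fm} : Prov A (C.rdiv B) → Prov (A.prod B) C
  | andI {A B C : Fm} : Prov A B → Prov A C → Prov A (B.and C)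
  | orE {A B C : Fm} : Prov A C → Prov B C → Prov (A.or B) C
  | cut {A B C : Fm} : Prov A B → Prov B C → Prov A C
  | ildivMono {A B C D : Fm} : Prov A B → Prov C D → Prov (B.ildiv C) (A.ildiv D)
  | irdivMono {A B C D : Fm} : Prov A B → Prov C D → Prov (C.irdiv B) (D.irdiv A)
  | ildivInd {A B : Fm} : Prov A (B.ldiv A) → Prov A (B.ildiv A)
  | irdivInd {A B : Fm} : Prov A (A.rdiv B) → Prov A (A.irdiv B)

/-- Conjunction of a finite list of formulas (⋀∅ = ⊤). -/
def bigAnd : List Fm → Fm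
  | [] => .top
  | A :: As => A.and (bigAnd As)

/-- Disjunction of a finite list of formulas (⋁∅ = ⊥). -/
def bigOr : List Fm → Fm
  | [] => .bot
  | A :: As => A.or (bigOr As)

/-- An independent IDFNL-pair: no finite Γ′ ⊆ Γ, Δ′ ⊆ Δ with ⋀Γ′ ⟶ ⋁Δ′. -/
def IndepPair (Γ Δ : Set Fm) : Prop :=
  ¬ ∃ (γ δ : List Fm), (∀ A ∈ γ, A ∈ Γ) ∧ (∀ A ∈ δ, A ∈ Δ) ∧ Prov (bigAnd γ) (bigOr δ)

/-- A prime IDFNL-theory. -/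
def PrimeTheory (T : Set Fm) : Prop :=
  (∀ A B, A ∈ T → B ∈ T → A.and B ∈ T) ∧
  (∀ A B, A ∈ T → Prov A B → B ∈ T) ∧
  (∀ A B, A.or B ∈ T → A ∈ T ∨ B ∈ T)

/-- Membership in the closure of a set of formulas Φ′: the smallest set
containing Φ′, ⊤, ⊥, closed under subformulas, and such that
A∖∖B ∈ Φ implies A∖B ∈ Φ and B//A ∈ Φ implies B/A ∈ Φ. -/
inductive Closure (Φ : Set Fm) : Fm → Prop
  | base {A : Fm} : A ∈ Φ → Closure Φ A
  | top : Closure Φ .top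
  | bot : Closure Φ .bot
  | andL {A B : Fm} : Closure Φ (A.and B) → Closure Φ A
  | andR {A B : Fm} : Closure Φ (A.and B) → Closure Φ B
  | orL {A B : Fm} : Closure Φ (A.or B) → Closure Φ A
  | orR {A B : Fm} : Closure Φ (A.or B) → Closure Φ B
  | prodL {A B : Fm} : Closure Φ (A.prod B) → Closure Φ A
  | prodR {A B : Fm} : Closure Φ (A.prod B) → Closure Φ B
  | ldivL {A B : Fm} : Closure Φ (A.ldiv B) → Closure Φ A
  | ldivR {A B : Fm} : Closure Φ (A.ldiv B) → Closure Φ B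
  | rdivL {A B : Fm} : Closure Φ (A.rdiv B) → Closure Φ A
  | rdivR {A B : Fm} : Closure Φ (A.rdiv B) → Closure Φ B
  | ildivL {A B : Fm} : Closure Φ (A.ildiv B) → Closure Φ A
  | ildivR {A B : Fm} : Closure Φ (A.ildiv B) → Closure Φ B
  | irdivL {A B : Fm} : Closure Φ (A.irdiv B) → Closure Φ A
  | irdivR {A B : Fm} : Closure Φ (A.irdiv B) → Closure Φ B
  | ildivDiv {A B : Fm} : Closure Φ (A.ildiv B) → Closure Φ (A.ldiv B)
  | irdivDiv {A B : Fm} : Closure Φ (B.irdiv A) → Closure Φ (B.rdiv A)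

/-- A set of formulas is closed iff it equals its own closure. -/
def ClosedSet (Φ : Set Fm) : Prop := {A | Closure Φ A} = Φ

/-- `entails Γ A`: ⋀Γ′ ⟶ A for some finite Γ′ ⊆ Γ. -/
def entails (Γ : Set Fm) (A : Fm) : Prop :=
  ∃ γ : List Fm, (∀ X ∈ γ, X ∈ Γ) ∧ Prov (bigAnd γ) A

/-- States of the canonical model over a (finite closed) set Φ:
independent IDFNL-pairs (a_in, a_out) with a_in ∪ a_out = Φ. -/
def CanState (Φ : Set Fm) : Type :=
  {a : Set Fm × Set Fm // IndepPair a.1 a.2 ∧ a.1 ∪ a.2 = Φ}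

/-- The canonical accessibility relation. -/
def canR (Φ : Set Fm) (a b c : CanState Φ) : Prop :=
  ∀ A B : Fm, A ∈ Φ → B ∈ Φ → entails a.1.1 A → entails b.1.1 (A.ldiv B) → entails c.1.1 B

/-- The canonical model M_Φ. -/
def canModel (Φ : Set Fm) : DosenModel (CanState Φ) :=
  ⟨canR Φ, fun p => {a | Fm.var p ∈ Φ ∧ Fm.var p ∈ a.1.1}⟩

section Syntactic

open Fm

theorem pAndMono {A A' B B' : Fm} (h1 : Prov A A') (h2 : Prov B B') :
    Prov (A.and B) (A'.and B') :=
  Prov.andI ((Prov.andE1 A B).cut h1) ((Prov.andE2 A B).cut h2)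

theorem pOrMono {A A' B B' : Fm} (h1 : Prov A A') (h2 : Prov B B') :
    Prov (A.or B) (A'.or B') :=
  Prov.orE (h1.cut (Prov.orI1 A' B')) (h2.cut (Prov.orI2 A' B'))

theorem pProdMono {A A' B B' : Fm} (h1 : Prov A A') (h2 : Prov B B') :
    Prov (A.prod B) (A'.prod B') := by
  have s1 : Prov (A.prod B') (A'.prod B') :=
    Prov.resR2 (h1.cut (Prov.resR1 (Prov.id (A'.prod B'))))
  exact Prov.resL2 (h2.cut ((Prov.resL1 s1)))

theorem pLdivMono {A A' B B' : Fm} (h1 : Prov A' A) (h2 : Prov B B') :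
    Prov (A.ldiv B) (A'.ldiv B') :=
  Prov.resL1 (((pProdMono h1 (Prov.id _)).cut (Prov.resL2 (Prov.id (A.ldiv B)))).cut h2)

theorem pRdivMono {A A' B B' : Fm} (h1 : Prov B B') (h2 : Prov A' A) :
    Prov (B.rdiv A) (B'.rdiv A') :=
  Prov.resR1 (((pProdMono (Prov.id _) h2).cut (Prov.resR2 (Prov.id (B.rdiv A)))).cut h1)

theorem pLdivAnd {A B C : Fm} : Prov ((A.ldiv B).and (A.ldiv C)) (A.ldiv (B.and C)) :=
  Prov.resL1 (Prov.andI (Prov.resL2 (Prov.andE1 _ _)) (Prov.resL2 (Prov.andE2 _ _)))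

theorem pRdivAnd {A B C : Fm} : Prov ((B.rdiv A).and (C.rdiv A)) ((B.and C).rdiv A) :=
  Prov.resR1 (Prov.andI (Prov.resR2 (Prov.andE1 _ _)) (Prov.resR2 (Prov.andE2 _ _)))

theorem pProdOrL {A B C : Fm} : Prov ((A.or B).prod C) ((A.prod C).or (B.prod C)) :=
  Prov.resR2 (Prov.orE (Prov.resR1 (Prov.orI1 _ _)) (Prov.resR1 (Prov.orI2 _ _)))

theorem pProdOrR {A B C : Fm} : Prov (C.prod (A.or B)) ((C.prod A).or (C.prod B)) :=
  Prov.resL2 (Prov.orE (Prov.resL1 (Prov.orI1 _ _)) (Prov.resL1 (Prov.orI2 _ _)))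

theorem pLdivOr {X1 Y1 X2 Y2 : Fm} :
    Prov ((X1.ldiv Y1).and (X2.ldiv Y2)) ((X1.or X2).ldiv (Y1.or Y2)) :=
  Prov.resL1 (pProdOrL.cut (Prov.orE
    ((Prov.resL2 (Prov.andE1 _ _)).cut (Prov.orI1 _ _))
    ((Prov.resL2 (Prov.andE2 _ _)).cut (Prov.orI2 _ _))))

theorem pRdivOr {X1 Y1 X2 Y2 : Fm} :
    Prov ((X1.rdiv Y1).and (X2.rdiv Y2)) ((X1.or X2).rdiv (Y1.or Y2)) :=
  Prov.resR1 (pProdOrR.cut (Prov.orE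
    ((Prov.resR2 (Prov.andE1 _ _)).cut (Prov.orI1 _ _))
    ((Prov.resR2 (Prov.andE2 _ _)).cut (Prov.orI2 _ _))))

theorem pBotProdL {Y : Fm} : Prov (Fm.bot.prod Y) Fm.bot := Prov.resR2 (Prov.bot _)
theorem pBotProdR {X : Fm} : Prov (X.prod Fm.bot) Fm.bot := Prov.resL2 (Prov.bot _)

theorem pLdivTop {C A : Fm} : Prov C (A.ldiv Fm.top) :=
  (Prov.top C).cut (Prov.resL1 (Prov.top _))

theorem pLdivBotBot {C D : Fm} : Prov C (Fm.bot.ldiv D) :=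
  (Prov.top C).cut (Prov.resL1 (pBotProdL.cut (Prov.bot D)))

theorem pRdivBotBot {C D : Fm} : Prov C (D.rdiv Fm.bot) :=
  (Prov.top C).cut (Prov.resR1 (pBotProdR.cut (Prov.bot D)))

theorem bigAnd_elem {γ : List Fm} {X : Fm} (h : X ∈ γ) : Prov (bigAnd γ) X := by
  induction γ with
  | nil => simp at h
  | cons a γ ih =>
    rcases List.mem_cons.1 h with h | h
    · subst h; exact Prov.andE1 _ _
    · exact (Prov.andE2 _ _).cut (ih h)

theorem bigAnd_intro {C : Fm} {γ : List Fm} (h : ∀ X ∈ γ, Prov C X) : Prov C (bigAnd γ) := by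
  induction γ with
  | nil => exact Prov.top C
  | cons a γ ih =>
    exact Prov.andI (h a (by simp)) (ih fun X hX => h X (by simp [hX]))

theorem bigAnd_sub {γ γ' : List Fm} (h : ∀ X ∈ γ', X ∈ γ) : Prov (bigAnd γ) (bigAnd γ') :=
  bigAnd_intro fun X hX => bigAnd_elem (h X hX)

theorem bigOr_elem {δ : List Fm} {X : Fm} (h : X ∈ δ) : Prov X (bigOr δ) := by
  induction δ with
  | nil => simp at h
  | cons a δ ih =>
    rcases List.mem_cons.1 h with h | h
    · subst h; exact Prov.orI1 _ _
    · exact (ih h).cut (Prov.orI2 _ _)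

theorem bigOr_elim {C : Fm} {δ : List Fm} (h : ∀ X ∈ δ, Prov X C) : Prov (bigOr δ) C := by
  induction δ with
  | nil => exact Prov.bot C
  | cons a δ ih =>
    exact Prov.orE (h a (by simp)) (ih fun X hX => h X (by simp [hX]))

theorem bigOr_sub {δ δ' : List Fm} (h : ∀ X ∈ δ, X ∈ δ') : Prov (bigOr δ) (bigOr δ') :=
  bigOr_elim fun X hX => bigOr_elem (h X hX)

theorem entails_of_mem {Γ : Set Fm} {A : Fm} (h : A ∈ Γ) : entails Γ A :=
  ⟨[A], by simpa using h, Prov.andE1 _ _⟩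

theorem entails_cut {Γ : Set Fm} {A B : Fm} (h : entails Γ A) (p : Prov A B) : entails Γ B := by
  obtain ⟨γ, hγ, hp⟩ := h
  exact ⟨γ, hγ, hp.cut p⟩

theorem entails_prov {Γ : Set Fm} {A : Fm} (p : Prov Fm.top A) : entails Γ A :=
  ⟨[], by simp, p⟩

theorem entails_and {Γ : Set Fm} {A B : Fm} (h1 : entails Γ A) (h2 : entails Γ B) :
    entails Γ (A.and B) := by
  obtain ⟨γ1, hγ1, hp1⟩ := h1
  obtain ⟨γ2, hγ2, hp2⟩ := h2
  refine ⟨γ1 ++ γ2, ?_, Prov.andI (((bigAnd_sub (γ' := γ1) fun X hX => ?_)).cut hp1)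
    (((bigAnd_sub (γ' := γ2) fun X hX => ?_)).cut hp2)⟩
  · intro X hX; rcases List.mem_append.1 hX with h | h
    · exact hγ1 X h
    · exact hγ2 X h
  · exact List.mem_append.2 (Or.inl hX)
  · exact List.mem_append.2 (Or.inr hX)

end Syntactic
section Machinery

variable {Φ : Set Fm}

theorem state_in_sub (a : CanState Φ) : a.1.1 ⊆ Φ := by
  intro x hx; rw [← a.2.2]; exact Or.inl hx

theorem state_prime (a : CanState Φ) {δ : List Fm} (hδ : ∀ d ∈ δ, d ∈ Φ)
    (h : entails a.1.1 (bigOr δ)) : ∃ d ∈ δ, d ∈ a.1.1 := by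
  by_contra hc
  push_neg at hc
  obtain ⟨γ, hγ, hp⟩ := h
  exact a.2.1 ⟨γ, δ, hγ, fun d hd => by
    have := hδ d hd
    have h2 : d ∈ a.1.1 ∪ a.1.2 := by rw [a.2.2]; exact this
    rcases h2 with h2 | h2
    · exact absurd h2 (hc d hd)
    · exact h2, hp⟩

theorem state_memOf (a : CanState Φ) {A : Fm} (hA : A ∈ Φ) (h : entails a.1.1 A) :
    A ∈ a.1.1 := by
  have := state_prime a (δ := [A]) (by simpa using hA)
    (entails_cut h (Prov.orI1 A (bigOr [])))
  simpa using this

/-- A "violation" predicate suitable for building maximal theories. -/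
structure ViolOK (Viol : Fm → Prop) : Prop where
  anti : ∀ {G G' : Fm}, Prov G G' → Viol G' → Viol G
  orr : ∀ {G d e : Fm}, Viol (G.and d) → Viol (G.and e) → Viol (G.and (d.or e))
  bot : Viol Fm.bot

def Wgood (Viol : Fm → Prop) (S : Set Fm) : Prop :=
  ∀ γ : List Fm, (∀ x ∈ γ, x ∈ S) → ¬ Viol (bigAnd γ)

theorem exists_maximal (hfin : Φ.Finite) (Viol : Fm → Prop) :
    ∀ (n : ℕ) (S : Set Fm), S ⊆ Φ → Wgood Viol S → (Φ \ S).ncard ≤ n →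
    ∃ T, S ⊆ T ∧ T ⊆ Φ ∧ Wgood Viol T ∧
      ∀ E ∈ Φ, E ∉ T → ¬ Wgood Viol (insert E T) := by
  intro n
  induction n with
  | zero =>
    intro S h1 h2 h3
    refine ⟨S, subset_rfl, h1, h2, fun E hE hES => ?_⟩
    exfalso
    have hempty : Φ \ S = ∅ := (Set.ncard_eq_zero hfin.diff).1 (Nat.le_zero.1 h3)
    have hE2 : E ∈ Φ \ S := ⟨hE, hES⟩
    rw [hempty] at hE2
    exact hE2
  | succ n ih =>
    intro S h1 h2 h3
    by_cases hm : ∀ E ∈ Φ, E ∉ S → ¬ Wgood Viol (insert E S)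
    · exact ⟨S, subset_rfl, h1, h2, hm⟩
    · push_neg at hm
      obtain ⟨E, hEΦ, hES, hW⟩ := hm
      have hss : Φ \ insert E S ⊂ Φ \ S := by
        constructor
        · exact Set.diff_subset_diff_right (Set.subset_insert E S)
        · intro hc
          have : E ∈ Φ \ insert E S := hc ⟨hEΦ, hES⟩
          exact this.2 (Set.mem_insert E S)
      have hcard : (Φ \ insert E S).ncard ≤ n := by
        have := Set.ncard_lt_ncard hss hfin.diff
        omega
      obtain ⟨T, hT1, hT2, hT3, hT4⟩ := ih (insert E S) (Set.insert_subset hEΦ h1) hW hcard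
      exact ⟨T, (Set.subset_insert E S).trans hT1, hT2, hT3, hT4⟩

variable {Viol : Fm → Prop} {S : Set Fm}

theorem max_force (hok : ViolOK Viol)
    (hmax : ∀ E ∈ Φ, E ∉ S → ¬ Wgood Viol (insert E S))
    {qs : List Fm} (hqs : ∀ q ∈ qs, q ∈ Φ) (hnot : ∀ q ∈ qs, q ∉ S) :
    ∃ γ, (∀ x ∈ γ, x ∈ S) ∧ Viol ((bigAnd γ).and (bigOr qs)) := by
  classical
  induction qs with
  | nil =>
    exact ⟨[], by simp, hok.anti (Prov.andE2 _ _) hok.bot⟩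
  | cons q qs ihq =>
    obtain ⟨γ', hγ', hv'⟩ := ihq (fun x hx => hqs x (by simp [hx]))
      (fun x hx => hnot x (by simp [hx]))
    have hq : ¬ Wgood Viol (insert q S) := hmax q (hqs q (by simp)) (hnot q (by simp))
    rw [Wgood] at hq
    push_neg at hq
    obtain ⟨γq, hγq, hvq⟩ := hq
    set l := γq.filter (fun x => decide (x ∈ S)) with hl
    have hlS : ∀ x ∈ l, x ∈ S := by
      intro x hx
      have := List.of_mem_filter hx
      simpa using this
    have hstep : Prov ((bigAnd l).and q) (bigAnd γq) := by
      refine bigAnd_intro fun X hX => ?_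
      by_cases hXS : X ∈ S
      · have : X ∈ l := by
          rw [hl]; exact List.mem_filter.2 ⟨hX, by simpa using hXS⟩
        exact (Prov.andE1 _ _).cut (bigAnd_elem this)
      · have : X = q := by
          rcases hγq X hX with h | h
          · exact h
          · exact absurd h hXS
        subst this; exact Prov.andE2 _ _
    have hvl : Viol ((bigAnd l).and q) := hok.anti hstep hvq
    refine ⟨l ++ γ', fun x hx => ?_, ?_⟩
    · rcases List.mem_append.1 hx with h | h
      · exact hlS x h
      · exact hγ' x h
    · have p1 : Viol ((bigAnd (l ++ γ')).and q) :=
        hok.anti (pAndMono (bigAnd_sub fun x hx => List.mem_append.2 (Or.inl hx)) (Prov.id q)) hvl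
      have p2 : Viol ((bigAnd (l ++ γ')).and (bigOr qs)) :=
        hok.anti (pAndMono (bigAnd_sub fun x hx => List.mem_append.2 (Or.inr hx)) (Prov.id _)) hv'
      exact hok.orr p1 p2

theorem max_theory (hok : ViolOK Viol) (hWS : Wgood Viol S)
    (hmax : ∀ E ∈ Φ, E ∉ S → ¬ Wgood Viol (insert E S))
    {P : Fm} (hPΦ : P ∈ Φ) (hent : entails S P) : P ∈ S := by
  by_contra hP
  obtain ⟨γ, hγ, hv⟩ := max_force hok hmax (qs := [P]) (by simpa using hPΦ) (by simpa using hP)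
  obtain ⟨γ0, hγ0, hp0⟩ := hent
  refine hWS (γ ++ γ0) (fun x hx => ?_) ?_
  · rcases List.mem_append.1 hx with h | h
    · exact hγ x h
    · exact hγ0 x h
  · refine hok.anti (Prov.andI (bigAnd_sub fun x hx => List.mem_append.2 (Or.inl hx))
      (((bigAnd_sub fun x hx => List.mem_append.2 (Or.inr hx)).cut hp0).cut
        (Prov.orI1 P (bigOr [])))) hv

theorem max_prime (hok : ViolOK Viol) (hWS : Wgood Viol S)
    (hmax : ∀ E ∈ Φ, E ∉ S → ¬ Wgood Viol (insert E S))
    {δ : List Fm} (hδΦ : ∀ d ∈ δ, d ∈ Φ) (hent : entails S (bigOr δ)) :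
    ∃ d ∈ δ, d ∈ S := by
  by_contra hc
  push_neg at hc
  obtain ⟨γ, hγ, hv⟩ := max_force hok hmax hδΦ hc
  obtain ⟨γ0, hγ0, hp0⟩ := hent
  refine hWS (γ ++ γ0) (fun x hx => ?_) ?_
  · rcases List.mem_append.1 hx with h | h
    · exact hγ x h
    · exact hγ0 x h
  · exact hok.anti (Prov.andI (bigAnd_sub fun x hx => List.mem_append.2 (Or.inl hx))
      ((bigAnd_sub fun x hx => List.mem_append.2 (Or.inr hx)).cut hp0)) hv

def mkState (hSΦ : S ⊆ Φ)
    (hprime : ∀ δ : List Fm, (∀ d ∈ δ, d ∈ Φ) → entails S (bigOr δ) → ∃ d ∈ δ, d ∈ S) :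
    CanState Φ :=
  ⟨(S, Φ \ S), by
    constructor
    · rintro ⟨γ, δ, hγ, hδ, hp⟩
      obtain ⟨d, hd, hdS⟩ := hprime δ (fun d hd => (hδ d hd).1) ⟨γ, hγ, hp⟩
      exact (hδ d hd).2 hdS
    · exact Set.union_diff_cancel hSΦ⟩

theorem mkState_in (hSΦ : S ⊆ Φ) (hprime) : (mkState hSΦ hprime).1.1 = S := rfl

end Machinery
section Existence

theorem pOrAppend {δ1 δ2 : List Fm} :
    Prov ((bigOr δ1).or (bigOr δ2)) (bigOr (δ1 ++ δ2)) :=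
  Prov.orE (bigOr_sub fun x hx => List.mem_append.2 (Or.inl hx))
    (bigOr_sub fun x hx => List.mem_append.2 (Or.inr hx))

theorem pRdivTop {C A : Fm} : Prov C (Fm.top.rdiv A) :=
  (Prov.top C).cut (Prov.resR1 (Prov.top _))

/-- rearrangement: (C∧⋁qs)∧⋀γ ⊢ C∧(⋀γ∧⋁qs) -/
theorem pRearr1 {C Q G : Fm} : Prov ((C.and Q).and G) (C.and (G.and Q)) :=
  Prov.andI ((Prov.andE1 _ _).cut (Prov.andE1 _ _))
    (Prov.andI (Prov.andE2 _ _) ((Prov.andE1 _ _).cut (Prov.andE2 _ _)))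

theorem L1 {Φ : Set Fm} (hfin : Φ.Finite) (a : CanState Φ) {A B' : Fm} (hA : A ∈ Φ)
    (hnot : ¬ entails a.1.1 (A.ldiv B')) :
    ∃ b c : CanState Φ, canR Φ b a c ∧ A ∈ b.1.1 ∧ ¬ entails c.1.1 B' := by
  classical
  set Vc : Fm → Prop := fun G => ∃ C, entails a.1.1 (A.ldiv C) ∧ Prov (C.and G) B' with hVc
  have hokc : ViolOK Vc := by
    constructor
    · rintro G G' hp ⟨C, h1, h2⟩
      exact ⟨C, h1, (pAndMono (Prov.id C) hp).cut h2⟩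
    · rintro G d e ⟨C1, h11, h12⟩ ⟨C2, h21, h22⟩
      refine ⟨C1.and C2, entails_cut (entails_and h11 h21) pLdivAnd, ?_⟩
      have r1 : Prov ((C1.and C2).and (G.and (d.or e))) (((C1.and C2).and G).and (d.or e)) :=
        Prov.andI (Prov.andI (Prov.andE1 _ _) ((Prov.andE2 _ _).cut (Prov.andE1 _ _)))
          ((Prov.andE2 _ _).cut (Prov.andE2 _ _))
      have r2 : Prov (((C1.and C2).and G).and d) B' :=
        (Prov.andI ((Prov.andE1 _ _).cut ((Prov.andE1 _ _).cut (Prov.andE1 _ _)))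
          (Prov.andI ((Prov.andE1 _ _).cut (Prov.andE2 _ _)) (Prov.andE2 _ _))).cut h12
      have r3 : Prov (((C1.and C2).and G).and e) B' :=
        (Prov.andI ((Prov.andE1 _ _).cut ((Prov.andE1 _ _).cut (Prov.andE2 _ _)))
          (Prov.andI ((Prov.andE1 _ _).cut (Prov.andE2 _ _)) (Prov.andE2 _ _))).cut h22
      exact (r1.cut (Prov.distrib _ _ _)).cut (Prov.orE r2 r3)
    · exact ⟨Fm.top, entails_prov pLdivTop, (Prov.andE2 _ _).cut (Prov.bot B')⟩
  have hWc0 : Wgood Vc ∅ := by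
    rintro γ hγ ⟨C, h1, h2⟩
    have hγnil : γ = [] := List.eq_nil_iff_forall_not_mem.2 fun x hx => hγ x hx
    subst hγnil
    exact hnot (entails_cut h1 (pLdivMono (Prov.id A)
      ((Prov.andI (Prov.id C) (Prov.top C)).cut h2)))
  obtain ⟨Sc, -, hScΦ, hWc, hmaxc⟩ :=
    exists_maximal hfin Vc ((Φ \ ∅).ncard) ∅ (Set.empty_subset Φ) hWc0 le_rfl
  have hprimec : ∀ δ : List Fm, (∀ d ∈ δ, d ∈ Φ) → entails Sc (bigOr δ) → ∃ d ∈ δ, d ∈ Sc :=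
    fun δ h1 h2 => max_prime hokc hWc hmaxc h1 h2
  let c : CanState Φ := mkState hScΦ hprimec
  have cmain : ∀ qs : List Fm, (∀ q ∈ qs, q ∈ Φ) → entails a.1.1 (A.ldiv (bigOr qs)) →
      ∃ q ∈ qs, q ∈ Sc := by
    intro qs hqsΦ hent
    by_contra hcon; push_neg at hcon
    obtain ⟨γ, hγ, hv⟩ := max_force hokc hmaxc hqsΦ hcon
    obtain ⟨C, h1, h2⟩ := hv
    exact hWc γ hγ ⟨C.and (bigOr qs), entails_cut (entails_and h1 hent) pLdivAnd,
      pRearr1.cut h2⟩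
  have hcB' : ¬ entails Sc B' := by
    rintro ⟨γ, hγ, hp⟩
    exact hWc γ hγ ⟨Fm.top, entails_prov pLdivTop, (Prov.andE2 _ _).cut hp⟩
  set Vb : Fm → Prop := fun G => ∃ qs : List Fm, (∀ q ∈ qs, q ∈ Φ) ∧
    entails a.1.1 (G.ldiv (bigOr qs)) ∧ ∀ q ∈ qs, q ∉ Sc with hVb
  have hokb : ViolOK Vb := by
    constructor
    · rintro G G' hp ⟨qs, h1, h2, h3⟩
      exact ⟨qs, h1, entails_cut h2 (pLdivMono hp (Prov.id _)), h3⟩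
    · rintro G d e ⟨qs1, h11, h12, h13⟩ ⟨qs2, h21, h22, h23⟩
      refine ⟨qs1 ++ qs2, fun q hq => ?_, ?_, fun q hq => ?_⟩
      · rcases List.mem_append.1 hq with h | h
        exacts [h11 q h, h21 q h]
      · exact entails_cut (entails_and h12 h22)
          (pLdivOr.cut (pLdivMono (Prov.distrib G d e) pOrAppend))
      · rcases List.mem_append.1 hq with h | h
        exacts [h13 q h, h23 q h]
    · exact ⟨[], by simp, ⟨[], by simp, pLdivBotBot⟩, by simp⟩
  have hWb0 : Wgood Vb {A} := by
    rintro γ hγ ⟨qs, h1, h2, h3⟩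
    have hAγ : Prov A (bigAnd γ) := bigAnd_intro fun x hx => by
      have hxA : x = A := by simpa using hγ x hx
      rw [hxA]; exact Prov.id A
    obtain ⟨q, hq, hqSc⟩ := cmain qs h1 (entails_cut h2 (pLdivMono hAγ (Prov.id _)))
    exact h3 q hq hqSc
  obtain ⟨Sb, hSb0, hSbΦ, hWb, hmaxb⟩ := exists_maximal hfin Vb ((Φ \ {A}).ncard) {A}
    (Set.singleton_subset_iff.2 hA) hWb0 le_rfl
  let b : CanState Φ := mkState hSbΦ (fun δ h1 h2 => max_prime hokb hWb hmaxb h1 h2)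
  refine ⟨b, c, ?_, (hSb0 rfl : A ∈ Sb), hcB'⟩
  intro P Q hP hQ hbP haPQ
  have hPSb : P ∈ Sb := max_theory hokb hWb hmaxb hP hbP
  have hQSc : Q ∈ Sc := by
    by_contra hQc
    refine hWb [P] (by simpa using hPSb) ⟨[Q], by simpa using hQ, ?_, by simpa using hQc⟩
    exact entails_cut haPQ (pLdivMono (Prov.andE1 _ _) (Prov.orI1 Q (bigOr [])))
  exact entails_of_mem hQSc

theorem L2 {Φ : Set Fm} (hfin : Φ.Finite) (a : CanState Φ) {A B' : Fm} (hA : A ∈ Φ)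
    (hnot : ¬ entails a.1.1 (B'.rdiv A)) :
    ∃ t u : CanState Φ, canR Φ a t u ∧ A ∈ t.1.1 ∧ ¬ entails u.1.1 B' := by
  classical
  set Vu : Fm → Prop := fun G => ∃ C : Fm, entails a.1.1 (C.rdiv A) ∧ Prov (C.and G) B' with hVu
  have hoku : ViolOK Vu := by
    constructor
    · rintro G G' hp ⟨C, h1, h2⟩
      exact ⟨C, h1, (pAndMono (Prov.id C) hp).cut h2⟩
    · rintro G d e ⟨C1, h11, h12⟩ ⟨C2, h21, h22⟩
      refine ⟨C1.and C2, entails_cut (entails_and h11 h21) pRdivAnd, ?_⟩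
      have r1 : Prov ((C1.and C2).and (G.and (d.or e))) (((C1.and C2).and G).and (d.or e)) :=
        Prov.andI (Prov.andI (Prov.andE1 _ _) ((Prov.andE2 _ _).cut (Prov.andE1 _ _)))
          ((Prov.andE2 _ _).cut (Prov.andE2 _ _))
      have r2 : Prov (((C1.and C2).and G).and d) B' :=
        (Prov.andI ((Prov.andE1 _ _).cut ((Prov.andE1 _ _).cut (Prov.andE1 _ _)))
          (Prov.andI ((Prov.andE1 _ _).cut (Prov.andE2 _ _)) (Prov.andE2 _ _))).cut h12
      have r3 : Prov (((C1.and C2).and G).and e) B' :=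
        (Prov.andI ((Prov.andE1 _ _).cut ((Prov.andE1 _ _).cut (Prov.andE2 _ _)))
          (Prov.andI ((Prov.andE1 _ _).cut (Prov.andE2 _ _)) (Prov.andE2 _ _))).cut h22
      exact (r1.cut (Prov.distrib _ _ _)).cut (Prov.orE r2 r3)
    · exact ⟨Fm.top, entails_prov pRdivTop, (Prov.andE2 _ _).cut (Prov.bot B')⟩
  have hWu0 : Wgood Vu ∅ := by
    rintro γ hγ ⟨C, h1, h2⟩
    have hγnil : γ = [] := List.eq_nil_iff_forall_not_mem.2 fun x hx => hγ x hx
    subst hγnil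
    exact hnot (entails_cut h1 (pRdivMono
      ((Prov.andI (Prov.id C) (Prov.top C)).cut h2) (Prov.id A)))
  obtain ⟨Su, -, hSuΦ, hWu, hmaxu⟩ :=
    exists_maximal hfin Vu ((Φ \ ∅).ncard) ∅ (Set.empty_subset Φ) hWu0 le_rfl
  let u : CanState Φ := mkState hSuΦ (fun δ h1 h2 => max_prime hoku hWu hmaxu h1 h2)
  have umain : ∀ qs : List Fm, (∀ q ∈ qs, q ∈ Φ) → entails a.1.1 ((bigOr qs).rdiv A) →
      ∃ q ∈ qs, q ∈ Su := by
    intro qs hqsΦ hent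
    by_contra hcon; push_neg at hcon
    obtain ⟨γ, hγ, hv⟩ := max_force hoku hmaxu hqsΦ hcon
    obtain ⟨C, h1, h2⟩ := hv
    exact hWu γ hγ ⟨C.and (bigOr qs), entails_cut (entails_and h1 hent) pRdivAnd,
      pRearr1.cut h2⟩
  have huB' : ¬ entails Su B' := by
    rintro ⟨γ, hγ, hp⟩
    exact hWu γ hγ ⟨Fm.top, entails_prov pRdivTop, (Prov.andE2 _ _).cut hp⟩
  set Vt : Fm → Prop := fun G => ∃ qs : List Fm, (∀ q ∈ qs, q ∈ Φ) ∧
    entails a.1.1 ((bigOr qs).rdiv G) ∧ ∀ q ∈ qs, q ∉ Su with hVt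
  have hokt : ViolOK Vt := by
    constructor
    · rintro G G' hp ⟨qs, h1, h2, h3⟩
      exact ⟨qs, h1, entails_cut h2 (pRdivMono (Prov.id _) hp), h3⟩
    · rintro G d e ⟨qs1, h11, h12, h13⟩ ⟨qs2, h21, h22, h23⟩
      refine ⟨qs1 ++ qs2, fun q hq => ?_, ?_, fun q hq => ?_⟩
      · rcases List.mem_append.1 hq with h | h
        exacts [h11 q h, h21 q h]
      · exact entails_cut (entails_and h12 h22)
          (pRdivOr.cut (pRdivMono pOrAppend (Prov.distrib G d e)))
      · rcases List.mem_append.1 hq with h | h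
        exacts [h13 q h, h23 q h]
    · exact ⟨[], by simp, ⟨[], by simp, pRdivBotBot⟩, by simp⟩
  have hWt0 : Wgood Vt {A} := by
    rintro γ hγ ⟨qs, h1, h2, h3⟩
    have hAγ : Prov A (bigAnd γ) := bigAnd_intro fun x hx => by
      have hxA : x = A := by simpa using hγ x hx
      rw [hxA]; exact Prov.id A
    obtain ⟨q, hq, hqSu⟩ := umain qs h1 (entails_cut h2 (pRdivMono (Prov.id _) hAγ))
    exact h3 q hq hqSu
  obtain ⟨St, hSt0, hStΦ, hWt, hmaxt⟩ := exists_maximal hfin Vt ((Φ \ {A}).ncard) {A}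
    (Set.singleton_subset_iff.2 hA) hWt0 le_rfl
  let t : CanState Φ := mkState hStΦ (fun δ h1 h2 => max_prime hokt hWt hmaxt h1 h2)
  refine ⟨t, u, ?_, (hSt0 rfl : A ∈ St), huB'⟩
  intro P Q hP hQ haP htPQ
  obtain ⟨γ, hγ, hp⟩ := htPQ
  have hPQ : Prov P (Q.rdiv (bigAnd γ)) := Prov.resR1 (Prov.resL2 hp)
  have hQSu : Q ∈ Su := by
    by_contra hQu
    refine hWt γ hγ ⟨[Q], by simpa using hQ, ?_, by simpa using hQu⟩
    exact entails_cut haP (hPQ.cut (pRdivMono (Prov.orI1 Q (bigOr [])) (Prov.id _)))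
  exact entails_of_mem hQSu

theorem L3 {Φ : Set Fm} (hfin : Φ.Finite) (a : CanState Φ) {X Y : Fm} (hX : X ∈ Φ) (hY : Y ∈ Φ)
    (hmem : X.prod Y ∈ a.1.1) :
    ∃ t u : CanState Φ, canR Φ t u a ∧ X ∈ t.1.1 ∧ Y ∈ u.1.1 := by
  classical
  set Vt : Fm → Prop := fun G => ∃ qs : List Fm, (∀ q ∈ qs, q ∈ Φ) ∧
    Prov (G.prod Y) (bigOr qs) ∧ ∀ q ∈ qs, q ∉ a.1.1 with hVt
  have hokt : ViolOK Vt := by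
    constructor
    · rintro G G' hp ⟨qs, h1, h2, h3⟩
      exact ⟨qs, h1, (pProdMono hp (Prov.id Y)).cut h2, h3⟩
    · rintro G d e ⟨qs1, h11, h12, h13⟩ ⟨qs2, h21, h22, h23⟩
      refine ⟨qs1 ++ qs2, fun q hq => ?_, ?_, fun q hq => ?_⟩
      · rcases List.mem_append.1 hq with h | h
        exacts [h11 q h, h21 q h]
      · exact ((pProdMono (Prov.distrib G d e) (Prov.id Y)).cut pProdOrL).cut
          ((pOrMono h12 h22).cut pOrAppend)
      · rcases List.mem_append.1 hq with h | h
        exacts [h13 q h, h23 q h]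
    · exact ⟨[], by simp, pBotProdL, by simp⟩
  have hWt0 : Wgood Vt {X} := by
    rintro γ hγ ⟨qs, h1, h2, h3⟩
    have hXγ : Prov X (bigAnd γ) := bigAnd_intro fun x hx => by
      have hxX : x = X := by simpa using hγ x hx
      rw [hxX]; exact Prov.id X
    obtain ⟨q, hq, hqa⟩ := state_prime a h1
      (entails_cut (entails_of_mem hmem) ((pProdMono hXγ (Prov.id Y)).cut h2))
    exact h3 q hq hqa
  obtain ⟨St, hSt0, hStΦ, hWt, hmaxt⟩ := exists_maximal hfin Vt ((Φ \ {X}).ncard) {X}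
    (Set.singleton_subset_iff.2 hX) hWt0 le_rfl
  let t : CanState Φ := mkState hStΦ (fun δ h1 h2 => max_prime hokt hWt hmaxt h1 h2)
  set Vu : Fm → Prop := fun G => ∃ (qs γt : List Fm), (∀ q ∈ qs, q ∈ Φ) ∧
    (∀ x ∈ γt, x ∈ St) ∧ Prov ((bigAnd γt).prod G) (bigOr qs) ∧ ∀ q ∈ qs, q ∉ a.1.1 with hVu
  have hoku : ViolOK Vu := by
    constructor
    · rintro G G' hp ⟨qs, γt, h1, h2, h3, h4⟩
      exact ⟨qs, γt, h1, h2, (pProdMono (Prov.id _) hp).cut h3, h4⟩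
    · rintro G d e ⟨qs1, γ1, h11, h12, h13, h14⟩ ⟨qs2, γ2, h21, h22, h23, h24⟩
      refine ⟨qs1 ++ qs2, γ1 ++ γ2, fun q hq => ?_, fun x hx => ?_, ?_, fun q hq => ?_⟩
      · rcases List.mem_append.1 hq with h | h
        exacts [h11 q h, h21 q h]
      · rcases List.mem_append.1 hx with h | h
        exacts [h12 x h, h22 x h]
      · refine ((pProdMono (Prov.id _) (Prov.distrib G d e)).cut pProdOrR).cut
          ((pOrMono ((pProdMono (bigAnd_sub fun x hx => List.mem_append.2 (Or.inl hx))
            (Prov.id _)).cut h13) ((pProdMono (bigAnd_sub fun x hx =>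
            List.mem_append.2 (Or.inr hx)) (Prov.id _)).cut h23)).cut pOrAppend)
      · rcases List.mem_append.1 hq with h | h
        exacts [h14 q h, h24 q h]
    · exact ⟨[], [], by simp, by simp, pBotProdR, by simp⟩
  have hWu0 : Wgood Vu {Y} := by
    rintro μ hμ ⟨qs, γt, h1, h2, h3, h4⟩
    have hYμ : Prov Y (bigAnd μ) := bigAnd_intro fun x hx => by
      have hxY : x = Y := by simpa using hμ x hx
      rw [hxY]; exact Prov.id Y
    exact hWt γt h2 ⟨qs, h1, (pProdMono (Prov.id _) hYμ).cut h3, h4⟩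
  obtain ⟨Su, hSu0, hSuΦ, hWu, hmaxu⟩ := exists_maximal hfin Vu ((Φ \ {Y}).ncard) {Y}
    (Set.singleton_subset_iff.2 hY) hWu0 le_rfl
  let u : CanState Φ := mkState hSuΦ (fun δ h1 h2 => max_prime hoku hWu hmaxu h1 h2)
  refine ⟨t, u, ?_, (hSt0 rfl : X ∈ St), (hSu0 rfl : Y ∈ Su)⟩
  intro P Q hP hQ htP huPQ
  obtain ⟨γ, hγ, hpγ⟩ := htP
  obtain ⟨μ, hμ, hpμ⟩ := huPQ
  have hkey : Prov ((bigAnd γ).prod (bigAnd μ)) Q :=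
    (pProdMono hpγ (Prov.id _)).cut (Prov.resL2 hpμ)
  have hQa : Q ∈ a.1.1 := by
    by_contra hQn
    exact hWu μ hμ ⟨[Q], γ, by simpa using hQ, hγ,
      hkey.cut (Prov.orI1 Q (bigOr [])), by simpa using hQn⟩
  exact entails_of_mem hQa

end Existence
section Truth

theorem entails_top {Γ : Set Fm} : entails Γ Fm.top := ⟨[], by simp, Prov.id _⟩

open Classical in
noncomputable def bigD {Φ : Set Fm} (hfin : Φ.Finite) (X : CanState Φ → Prop) : Fm :=
  bigOr ((hfin.toFinset.powerset.toList).map fun T : Finset Fm =>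
    if ∃ s : CanState Φ, X s ∧ s.1.1 = ↑T then bigAnd T.toList else Fm.bot)

theorem bigD_entails {Φ : Set Fm} (hfin : Φ.Finite) {X : CanState Φ → Prop}
    {s : CanState Φ} (hs : X s) : entails s.1.1 (bigD hfin X) := by
  classical
  have hsub : s.1.1 ⊆ Φ := state_in_sub s
  have hsfin : s.1.1.Finite := hfin.subset hsub
  set T : Finset Fm := hsfin.toFinset with hT
  have hTs : (↑T : Set Fm) = s.1.1 := hsfin.coe_toFinset
  have hTmem : T ∈ hfin.toFinset.powerset := by
    rw [Finset.mem_powerset]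
    intro x hx
    rw [Set.Finite.mem_toFinset]
    exact hsub (by rw [← hTs]; exact Finset.mem_coe.2 hx)
  have helem : bigAnd T.toList ∈ (hfin.toFinset.powerset.toList).map (fun T : Finset Fm =>
      if ∃ s : CanState Φ, X s ∧ s.1.1 = ↑T then bigAnd T.toList else Fm.bot) :=
    List.mem_map.2 ⟨T, Finset.mem_toList.2 hTmem, if_pos ⟨s, hs, hTs.symm⟩⟩
  exact ⟨T.toList, fun x hx => by
      rw [← hTs]; exact Finset.mem_coe.2 (Finset.mem_toList.1 hx),
    (Prov.id _).cut (bigOr_elem helem)⟩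

theorem bigD_elim {Φ : Set Fm} (hfin : Φ.Finite) {X : CanState Φ → Prop} {F : Fm}
    (h : ∀ s : CanState Φ, X s → entails s.1.1 F) : Prov (bigD hfin X) F := by
  classical
  refine bigOr_elim fun G hG => ?_
  obtain ⟨T, hT, hGe⟩ := List.mem_map.1 hG
  rw [← hGe]
  split_ifs with hex
  · obtain ⟨s, hsX, hsT⟩ := hex
    obtain ⟨γ, hγ, hp⟩ := h s hsX
    refine (bigAnd_sub fun x hx => ?_).cut hp
    have hx2 : x ∈ (↑T : Set Fm) := by rw [← hsT]; exact hγ x hx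
    exact Finset.mem_toList.2 (Finset.mem_coe.1 hx2)
  · exact Prov.bot F

theorem truth {Φ : Set Fm} (hfin : Φ.Finite) (hcl : ∀ C : Fm, Closure Φ C → C ∈ Φ) :
    ∀ C : Fm, C ∈ Φ → ∀ a : CanState Φ, (sat (canModel Φ) C a ↔ C ∈ a.1.1) := by
  intro C
  induction C with
  | var p =>
    intro hC a
    exact ⟨fun h => h.2, fun h => ⟨hC, h⟩⟩
  | top =>
    intro hC a
    exact ⟨fun _ => state_memOf a hC entails_top, fun _ => trivial⟩
  | bot =>
    intro hC a
    refine ⟨fun h => h.elim, fun h => ?_⟩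
    exact absurd ⟨[Fm.bot], [], by simpa using h, by simp, Prov.andE1 _ _⟩ a.2.1
  | and A B ihA ihB =>
    intro hC a
    have hA : A ∈ Φ := hcl A (Closure.andL (Closure.base hC))
    have hB : B ∈ Φ := hcl B (Closure.andR (Closure.base hC))
    constructor
    · rintro ⟨h1, h2⟩
      exact state_memOf a hC (entails_and (entails_of_mem ((ihA hA a).1 h1))
        (entails_of_mem ((ihB hB a).1 h2)))
    · intro h
      exact ⟨(ihA hA a).2 (state_memOf a hA (entails_cut (entails_of_mem h) (Prov.andE1 A B))),
        (ihB hB a).2 (state_memOf a hB (entails_cut (entails_of_mem h) (Prov.andE2 A B)))⟩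
  | or A B ihA ihB =>
    intro hC a
    have hA : A ∈ Φ := hcl A (Closure.orL (Closure.base hC))
    have hB : B ∈ Φ := hcl B (Closure.orR (Closure.base hC))
    constructor
    · rintro (h | h)
      · exact state_memOf a hC (entails_cut (entails_of_mem ((ihA hA a).1 h)) (Prov.orI1 A B))
      · exact state_memOf a hC (entails_cut (entails_of_mem ((ihB hB a).1 h)) (Prov.orI2 A B))
    · intro h
      have := state_prime a (δ := [A, B]) (by simp [hA, hB])
        (entails_cut (entails_of_mem h) (pOrMono (Prov.id A) (Prov.orI1 B (bigOr []))))
      rcases this with ⟨d, hd, hda⟩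
      rcases List.mem_cons.1 hd with rfl | hd2
      · exact Or.inl ((ihA hA a).2 hda)
      · have : d = B := by simpa using hd2
        subst this
        exact Or.inr ((ihB hB a).2 hda)
  | prod X Y ihX ihY =>
    intro hC a
    have hX : X ∈ Φ := hcl X (Closure.prodL (Closure.base hC))
    have hY : Y ∈ Φ := hcl Y (Closure.prodR (Closure.base hC))
    constructor
    · rintro ⟨t, u, hR, h1, h2⟩
      exact state_memOf a hC (hR X (X.prod Y) hX hC (entails_of_mem ((ihX hX t).1 h1))
        (entails_cut (entails_of_mem ((ihY hY u).1 h2)) (Prov.resL1 (Prov.id (X.prod Y)))))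
    · intro h
      obtain ⟨t, u, hR, h1, h2⟩ := L3 hfin a hX hY h
      exact ⟨t, u, hR, (ihX hX t).2 h1, (ihY hY u).2 h2⟩
  | ldiv A B ihA ihB =>
    intro hC a
    have hA : A ∈ Φ := hcl A (Closure.ldivL (Closure.base hC))
    have hB : B ∈ Φ := hcl B (Closure.ldivR (Closure.base hC))
    constructor
    · intro hs
      by_contra hmem
      have hne : ¬ entails a.1.1 (A.ldiv B) := fun he => hmem (state_memOf a hC he)
      obtain ⟨b, c, hR, hAb, hcB⟩ := L1 hfin a hA hne
      exact hcB (entails_of_mem ((ihB hB c).1 (hs b c hR ((ihA hA b).2 hAb))))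
    · intro h t u hR hsA
      exact (ihB hB u).2 (state_memOf u hB (hR A B hA hB
        (entails_of_mem ((ihA hA t).1 hsA)) (entails_of_mem h)))
  | rdiv B A ihB ihA =>
    intro hC a
    have hB : B ∈ Φ := hcl B (Closure.rdivL (Closure.base hC))
    have hA : A ∈ Φ := hcl A (Closure.rdivR (Closure.base hC))
    constructor
    · intro hs
      by_contra hmem
      have hne : ¬ entails a.1.1 (B.rdiv A) := fun he => hmem (state_memOf a hC he)
      obtain ⟨t, u, hR, hAt, huB⟩ := L2 hfin a hA hne
      exact huB (entails_of_mem ((ihB hB u).1 (hs t u hR ((ihA hA t).2 hAt))))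
    · intro h t u hR hsA
      exact (ihB hB u).2 (state_memOf u hB (hR (B.rdiv A) B hC hB (entails_of_mem h)
        (entails_cut (entails_of_mem ((ihA hA t).1 hsA))
          (Prov.resL1 (Prov.resR2 (Prov.id (B.rdiv A)))))))
  | ildiv A B ihA ihB =>
    intro hC a
    have hA : A ∈ Φ := hcl A (Closure.ildivL (Closure.base hC))
    have hB : B ∈ Φ := hcl B (Closure.ildivR (Closure.base hC))
    have key : ∀ (xs : List (CanState Φ)) (s t : CanState Φ), A.ildiv B ∈ s.1.1 →
        Rleft (canR Φ) xs s t → (∀ x ∈ xs, A ∈ x.1.1) → B ∈ t.1.1 := by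
      intro xs
      induction xs with
      | nil => intro s t _ hR _; exact hR.elim
      | cons x xs ih =>
        intro s t hmem hR hAx
        cases xs with
        | nil =>
          have hR' : canR Φ x s t := hR
          exact state_memOf t hB (hR' A B hA hB (entails_of_mem (hAx x (by simp)))
            (entails_cut (entails_of_mem hmem) ((Prov.ildivUnfold A B).cut (Prov.andE1 _ _))))
        | cons y ys =>
          obtain ⟨z, h1, h2⟩ := hR
          have hz : A.ildiv B ∈ z.1.1 := state_memOf z hC (h1 A (A.ildiv B) hA hC
            (entails_of_mem (hAx x (by simp)))
            (entails_cut (entails_of_mem hmem) ((Prov.ildivUnfold A B).cut (Prov.andE2 _ _))))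
          exact ih z t hz h2 (fun w hw => hAx w (by simp [hw]))
    constructor
    · intro hs
      set Xp : CanState Φ → Prop := fun s => sat (canModel Φ) (A.ildiv B) s with hXp
      have claim : Prov (bigD hfin Xp) (A.ldiv (B.and (bigD hfin Xp))) := by
        refine bigD_elim hfin fun s hsX => ?_
        by_contra hne
        obtain ⟨b, c, hR, hAb, hcB⟩ := L1 hfin s hA hne
        apply hcB
        have hcX : Xp c := by
          intro ys t hny hRy hAy
          refine hsX (b :: ys) t (by simp) ?_ ?_
          · cases ys with
            | nil => exact absurd rfl hny
            | cons y ys' => exact ⟨c, hR, hRy⟩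
          · intro w hw
            rcases List.mem_cons.1 hw with rfl | hw
            · exact (ihA hA w).2 hAb
            · exact hAy w hw
        have hsatB : sat (canModel Φ) B c := by
          refine hsX [b] c (by simp) hR ?_
          intro w hw
          have : w = b := by simpa using hw
          subst this
          exact (ihA hA w).2 hAb
        exact entails_and (entails_of_mem ((ihB hB c).1 hsatB)) (bigD_entails hfin hcX)
      have hGind : Prov (B.and (bigD hfin Xp)) (A.ildiv (B.and (bigD hfin Xp))) :=
        Prov.ildivInd ((Prov.andE2 _ _).cut claim)
      have hGB : Prov (B.and (bigD hfin Xp)) (A.ildiv B) :=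
        hGind.cut (Prov.ildivMono (Prov.id A) (Prov.andE1 _ _))
      have final : Prov (bigD hfin Xp) (A.ildiv B) :=
        (Prov.andI (claim.cut (pLdivMono (Prov.id A) (Prov.andE1 _ _)))
          (claim.cut (pLdivMono (Prov.id A) hGB))).cut (Prov.ildivFold A B)
      exact state_memOf a hC (entails_cut (bigD_entails hfin (hs : Xp a)) final)
    · intro h xs t hne hR hsA
      exact (ihB hB t).2 (key xs a t h hR (fun x hx => (ihA hA x).1 (hsA x hx)))
  | irdiv B A ihB ihA =>
    intro hC a
    have hB : B ∈ Φ := hcl B (Closure.irdivL (Closure.base hC))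
    have hA : A ∈ Φ := hcl A (Closure.irdivR (Closure.base hC))
    have pStep : Prov A ((B.irdiv A).ldiv (B.irdiv A)) :=
      Prov.resL1 (Prov.resR2 ((Prov.irdivUnfold A B).cut (Prov.andE2 _ _)))
    have pFin : Prov A ((B.irdiv A).ldiv B) :=
      Prov.resL1 (Prov.resR2 ((Prov.irdivUnfold A B).cut (Prov.andE1 _ _)))
    have key : ∀ (xs : List (CanState Φ)) (s t : CanState Φ), B.irdiv A ∈ s.1.1 →
        Rright (canR Φ) s xs t → (∀ x ∈ xs, A ∈ x.1.1) → B ∈ t.1.1 := by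
      intro xs
      induction xs with
      | nil => intro s t _ hR _; exact hR.elim
      | cons x xs ih =>
        intro s t hmem hR hAx
        cases xs with
        | nil =>
          have hR' : canR Φ s x t := hR
          exact state_memOf t hB (hR' (B.irdiv A) B hC hB (entails_of_mem hmem)
            (entails_cut (entails_of_mem (hAx x (by simp))) pFin))
        | cons y ys =>
          obtain ⟨z, h1, h2⟩ := hR
          have hz : B.irdiv A ∈ z.1.1 := state_memOf z hC (h1 (B.irdiv A) (B.irdiv A) hC hC
            (entails_of_mem hmem)
            (entails_cut (entails_of_mem (hAx x (by simp))) pStep))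
          exact ih z t hz h2 (fun w hw => hAx w (by simp [hw]))
    constructor
    · intro hs
      set Xp : CanState Φ → Prop := fun s => sat (canModel Φ) (B.irdiv A) s with hXp
      have claim : Prov (bigD hfin Xp) ((B.and (bigD hfin Xp)).rdiv A) := by
        refine bigD_elim hfin fun s hsX => ?_
        by_contra hne
        obtain ⟨t, u, hR, hAt, huB⟩ := L2 hfin s hA hne
        apply huB
        have huX : Xp u := by
          intro ys t' hny hRy hAy
          refine hsX (t :: ys) t' (by simp) ?_ ?_
          · cases ys with
            | nil => exact absurd rfl hny
            | cons y ys' => exact ⟨u, hR, hRy⟩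
          · intro w hw
            rcases List.mem_cons.1 hw with rfl | hw
            · exact (ihA hA w).2 hAt
            · exact hAy w hw
        have hsatB : sat (canModel Φ) B u := by
          refine hsX [t] u (by simp) hR ?_
          intro w hw
          have : w = t := by simpa using hw
          subst this
          exact (ihA hA w).2 hAt
        exact entails_and (entails_of_mem ((ihB hB u).1 hsatB)) (bigD_entails hfin huX)
      have hGind : Prov (B.and (bigD hfin Xp)) ((B.and (bigD hfin Xp)).irdiv A) :=
        Prov.irdivInd ((Prov.andE2 _ _).cut claim)
      have hGB : Prov (B.and (bigD hfin Xp)) (B.irdiv A) :=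
        hGind.cut (Prov.irdivMono (Prov.id A) (Prov.andE1 _ _))
      have final : Prov (bigD hfin Xp) (B.irdiv A) :=
        (Prov.andI (claim.cut (pRdivMono hGB (Prov.id A)))
          (claim.cut (pRdivMono (Prov.andE1 _ _) (Prov.id A)))).cut (Prov.irdivFold A B)
      exact state_memOf a hC (entails_cut (bigD_entails hfin (hs : Xp a)) final)
    · intro h xs t hne hR hsA
      exact (ihB hB t).2 (key xs a t h hR (fun x hx => (ihA hA x).1 (hsA x hx)))

end Truth
section Final

def subF : Fm → Set Fm
  | .var n => {.var n}
  | .top => {.top}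
  | .bot => {.bot}
  | .and A B => insert (A.and B) (subF A ∪ subF B)
  | .or A B => insert (A.or B) (subF A ∪ subF B)
  | .prod A B => insert (A.prod B) (subF A ∪ subF B)
  | .ldiv A B => insert (A.ldiv B) (subF A ∪ subF B)
  | .rdiv A B => insert (A.rdiv B) (subF A ∪ subF B)
  | .ildiv A B => insert (A.ildiv B) (insert (A.ldiv B) (subF A ∪ subF B))
  | .irdiv A B => insert (A.irdiv B) (insert (A.rdiv B) (subF A ∪ subF B))

theorem subF_finite : ∀ A : Fm, (subF A).Finite := by
  intro A
  induction A with
  | var n => exact Set.finite_singleton _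
  | top => exact Set.finite_singleton _
  | bot => exact Set.finite_singleton _
  | and A B ihA ihB => exact (ihA.union ihB).insert _
  | or A B ihA ihB => exact (ihA.union ihB).insert _
  | prod A B ihA ihB => exact (ihA.union ihB).insert _
  | ldiv A B ihA ihB => exact (ihA.union ihB).insert _
  | rdiv A B ihA ihB => exact (ihA.union ihB).insert _
  | ildiv A B ihA ihB => exact (((ihA.union ihB).insert _).insert _)
  | irdiv A B ihA ihB => exact (((ihA.union ihB).insert _).insert _)

theorem subF_self : ∀ A : Fm, A ∈ subF A := by
  intro A
  cases A <;> simp [subF]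

theorem subF_trans : ∀ C : Fm, ∀ X ∈ subF C, subF X ⊆ subF C := by
  intro C
  induction C with
  | var n =>
    intro X hX y hy
    simp only [subF, Set.mem_singleton_iff] at hX; subst hX; exact hy
  | top =>
    intro X hX y hy
    simp only [subF, Set.mem_singleton_iff] at hX; subst hX; exact hy
  | bot =>
    intro X hX y hy
    simp only [subF, Set.mem_singleton_iff] at hX; subst hX; exact hy
  | and A B ihA ihB =>
    intro X hX y hy
    simp only [subF, Set.mem_insert_iff, Set.mem_union] at hX ⊢
    rcases hX with rfl | h | h
    · simpa [subF, Set.mem_insert_iff, Set.mem_union] using hy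
    · exact Or.inr (Or.inl (ihA X h hy))
    · exact Or.inr (Or.inr (ihB X h hy))
  | or A B ihA ihB =>
    intro X hX y hy
    simp only [subF, Set.mem_insert_iff, Set.mem_union] at hX ⊢
    rcases hX with rfl | h | h
    · simpa [subF, Set.mem_insert_iff, Set.mem_union] using hy
    · exact Or.inr (Or.inl (ihA X h hy))
    · exact Or.inr (Or.inr (ihB X h hy))
  | prod A B ihA ihB =>
    intro X hX y hy
    simp only [subF, Set.mem_insert_iff, Set.mem_union] at hX ⊢
    rcases hX with rfl | h | h
    · simpa [subF, Set.mem_insert_iff, Set.mem_union] using hy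
    · exact Or.inr (Or.inl (ihA X h hy))
    · exact Or.inr (Or.inr (ihB X h hy))
  | ldiv A B ihA ihB =>
    intro X hX y hy
    simp only [subF, Set.mem_insert_iff, Set.mem_union] at hX ⊢
    rcases hX with rfl | h | h
    · simpa [subF, Set.mem_insert_iff, Set.mem_union] using hy
    · exact Or.inr (Or.inl (ihA X h hy))
    · exact Or.inr (Or.inr (ihB X h hy))
  | rdiv A B ihA ihB =>
    intro X hX y hy
    simp only [subF, Set.mem_insert_iff, Set.mem_union] at hX ⊢
    rcases hX with rfl | h | h
    · simpa [subF, Set.mem_insert_iff, Set.mem_union] using hy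
    · exact Or.inr (Or.inl (ihA X h hy))
    · exact Or.inr (Or.inr (ihB X h hy))
  | ildiv A B ihA ihB =>
    intro X hX y hy
    simp only [subF, Set.mem_insert_iff, Set.mem_union] at hX ⊢
    rcases hX with rfl | rfl | h | h
    · simpa [subF, Set.mem_insert_iff, Set.mem_union] using hy
    · have hy2 : y = A.ldiv B ∨ y ∈ subF A ∨ y ∈ subF B := by
        simpa [subF, Set.mem_insert_iff, Set.mem_union] using hy
      rcases hy2 with rfl | h | h
      · exact Or.inr (Or.inl rfl)
      · exact Or.inr (Or.inr (Or.inl h))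
      · exact Or.inr (Or.inr (Or.inr h))
    · exact Or.inr (Or.inr (Or.inl (ihA X h hy)))
    · exact Or.inr (Or.inr (Or.inr (ihB X h hy)))
  | irdiv A B ihA ihB =>
    intro X hX y hy
    simp only [subF, Set.mem_insert_iff, Set.mem_union] at hX ⊢
    rcases hX with rfl | rfl | h | h
    · simpa [subF, Set.mem_insert_iff, Set.mem_union] using hy
    · have hy2 : y = A.rdiv B ∨ y ∈ subF A ∨ y ∈ subF B := by
        simpa [subF, Set.mem_insert_iff, Set.mem_union] using hy
      rcases hy2 with rfl | h | h
      · exact Or.inr (Or.inl rfl)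
      · exact Or.inr (Or.inr (Or.inl h))
      · exact Or.inr (Or.inr (Or.inr h))
    · exact Or.inr (Or.inr (Or.inl (ihA X h hy)))
    · exact Or.inr (Or.inr (Or.inr (ihB X h hy)))

theorem closure_mem_subF {A B : Fm} :
    ∀ C : Fm, Closure {A, B} C →
      C ∈ insert Fm.top (insert Fm.bot (subF A ∪ subF B)) := by
  have hstep : ∀ {P Q : Fm}, Q ∈ subF P →
      P ∈ insert Fm.top (insert Fm.bot (subF A ∪ subF B)) →
      Q ∈ insert Fm.top (insert Fm.bot (subF A ∪ subF B)) := by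
    intro P Q hQ hP
    rcases Set.mem_insert_iff.1 hP with rfl | hP2
    · simp only [subF, Set.mem_singleton_iff] at hQ; subst hQ; exact Set.mem_insert _ _
    rcases Set.mem_insert_iff.1 hP2 with rfl | hP3
    · simp only [subF, Set.mem_singleton_iff] at hQ; subst hQ
      exact Set.mem_insert_iff.2 (Or.inr (Set.mem_insert _ _))
    rcases hP3 with h | h
    · exact Set.mem_insert_iff.2 (Or.inr (Set.mem_insert_iff.2 (Or.inr
        (Or.inl (subF_trans A P h hQ)))))
    · exact Set.mem_insert_iff.2 (Or.inr (Set.mem_insert_iff.2 (Or.inr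
        (Or.inr (subF_trans B P h hQ)))))
  intro C h
  induction h with
  | base hx =>
    rcases hx with rfl | hx
    · exact Set.mem_insert_iff.2 (Or.inr (Set.mem_insert_iff.2 (Or.inr
        (Or.inl (subF_self _)))))
    · have hxb := Set.mem_singleton_iff.1 hx
      subst hxb
      exact Set.mem_insert_iff.2 (Or.inr (Set.mem_insert_iff.2 (Or.inr
        (Or.inr (subF_self _)))))
  | top => exact Set.mem_insert _ _
  | bot => exact Set.mem_insert_iff.2 (Or.inr (Set.mem_insert _ _))
  | andL _ ih => exact hstep (by simp [subF, subF_self]) ih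
  | andR _ ih => exact hstep (by simp [subF, subF_self]) ih
  | orL _ ih => exact hstep (by simp [subF, subF_self]) ih
  | orR _ ih => exact hstep (by simp [subF, subF_self]) ih
  | prodL _ ih => exact hstep (by simp [subF, subF_self]) ih
  | prodR _ ih => exact hstep (by simp [subF, subF_self]) ih
  | ldivL _ ih => exact hstep (by simp [subF, subF_self]) ih
  | ldivR _ ih => exact hstep (by simp [subF, subF_self]) ih
  | rdivL _ ih => exact hstep (by simp [subF, subF_self]) ih
  | rdivR _ ih => exact hstep (by simp [subF, subF_self]) ih
  | ildivL _ ih => exact hstep (by simp [subF, subF_self]) ih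
  | ildivR _ ih => exact hstep (by simp [subF, subF_self]) ih
  | irdivL _ ih => exact hstep (by simp [subF, subF_self]) ih
  | irdivR _ ih => exact hstep (by simp [subF, subF_self]) ih
  | ildivDiv _ ih => exact hstep (by simp [subF]) ih
  | irdivDiv _ ih => exact hstep (by simp [subF]) ih

theorem phi_finite (A B : Fm) : {C : Fm | Closure {A, B} C}.Finite := by
  apply Set.Finite.subset ((((subF_finite A).union (subF_finite B)).insert Fm.bot).insert Fm.top)
  intro C hC
  exact closure_mem_subF C hC

theorem closure_closed (Φ0 : Set Fm) : ∀ C : Fm, Closure {D | Closure Φ0 D} C → Closure Φ0 C := by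
  intro C h
  induction h with
  | base hx => exact hx
  | top => exact Closure.top
  | bot => exact Closure.bot
  | andL _ ih => exact Closure.andL ih
  | andR _ ih => exact Closure.andR ih
  | orL _ ih => exact Closure.orL ih
  | orR _ ih => exact Closure.orR ih
  | prodL _ ih => exact Closure.prodL ih
  | prodR _ ih => exact Closure.prodR ih
  | ldivL _ ih => exact Closure.ldivL ih
  | ldivR _ ih => exact Closure.ldivR ih
  | rdivL _ ih => exact Closure.rdivL ih
  | rdivR _ ih => exact Closure.rdivR ih
  | ildivL _ ih => exact Closure.ildivL ih
  | ildivR _ ih => exact Closure.ildivR ih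
  | irdivL _ ih => exact Closure.irdivL ih
  | irdivR _ ih => exact Closure.irdivR ih
  | ildivDiv _ ih => exact Closure.ildivDiv ih
  | irdivDiv _ ih => exact Closure.irdivDiv ih

end Final

/-- Weak completeness: every sequent valid in every Došen frame is provable in IDFNL. -/
theorem completeness (A B : Fm)
    (h : ∀ (S : Type) [Nonempty S] (M : DosenModel S), valid M A B) : Prov A B := by
  by_contra hnp
  set Φ : Set Fm := {C | Closure {A, B} C} with hΦ
  have hfin : Φ.Finite := phi_finite A B
  have hcl : ∀ C : Fm, Closure Φ C → C ∈ Φ := fun C hc => closure_closed _ C hc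
  have hAΦ : A ∈ Φ := Closure.base (Set.mem_insert A {B})
  have hBΦ : B ∈ Φ := Closure.base (Set.mem_insert_iff.2 (Or.inr rfl))
  set V0 : Fm → Prop := fun G => Prov G B with hV0
  have hok0 : ViolOK V0 := by
    constructor
    · exact fun hp hv => hp.cut hv
    · intro G d e h1 h2; exact (Prov.distrib G d e).cut (Prov.orE h1 h2)
    · exact Prov.bot B
  have hW0 : Wgood V0 {A} := by
    intro γ hγ hv
    have hAγ : Prov A (bigAnd γ) := bigAnd_intro fun x hx => by
      have hxA : x = A := by simpa using hγ x hx
      rw [hxA]; exact Prov.id A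
    exact hnp (hAγ.cut hv)
  obtain ⟨S0, hS00, hS0Φ, hWS0, hmax0⟩ := exists_maximal hfin V0 ((Φ \ {A}).ncard) {A}
    (Set.singleton_subset_iff.2 hAΦ) hW0 le_rfl
  let a : CanState Φ := mkState hS0Φ (fun δ h1 h2 => max_prime hok0 hWS0 hmax0 h1 h2)
  have hBa : B ∉ S0 := by
    intro hBm
    exact hWS0 [B] (by simpa using hBm) (Prov.andE1 _ _)
  have hsatA : sat (canModel Φ) A a := (truth hfin hcl A hAΦ a).2 (hS00 rfl)
  haveI : Nonempty (CanState Φ) := ⟨a⟩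
  have hsatB := h (CanState Φ) (canModel Φ) a hsatA
  exact hBa ((truth hfin hcl B hBΦ a).1 hsatB)
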